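/- Every word of length less than 6 in two letters is nearly symmetric, and consequently every word of length less than 6 in two real symmetric positive definite matrices has only positive eigenvalues. -/

import Mathlib

open Matrix

/-- Evaluate a word over `{A,B}` (`false ↦ A`, `true ↦ B`) at two matrices. -/
def wordEval {n : Type*} [Fintype n] [DecidableEq n]
    (w : List Bool) (A B : Matrix n n ℝ) : Matrix n n ℝ :=
  (w.map (fun c => if c then B else A)).prod

section Aux

open ComplexOrder
open scoped MatrixOrder

lemma split_aux : ∀ w : List Bool, w.length < 6 →
    ∃ S1 S2 : List Bool, S1.reverse = S1 ∧ S2.reverse = S2 ∧ w = S1 ++ S2 := by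
  have key : ∀ w : List Bool, w.length < 6 →
      ∃ k : Fin (w.length + 1),
        (w.take k).reverse = w.take k ∧ (w.drop k).reverse = w.drop k := by
    intro w hw
    match w with
    | [] => exact ⟨0, by simp⟩
    | [a] => revert a; decide
    | [a,b] => revert a b; decide
    | [a,b,c] => revert a b c; decide
    | [a,b,c,d] => revert a b c d; decide
    | [a,b,c,d,e] => revert a b c d e; decide
    | a::b::c::d::e::f::t => simp at hw; omega
  intro w hw
  obtain ⟨k, h1, h2⟩ := key w hw
  exact ⟨w.take k, w.drop k, h1, h2, (List.take_append_drop k w).symm⟩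

variable {n : Type} [Fintype n] [DecidableEq n]

lemma posDef_conjTranspose_mul_self_of_isUnit {R : Matrix n n ℂ} (hR : IsUnit R) :
    (Rᴴ * R).PosDef := by
  refine PosDef.of_dotProduct_mulVec_pos (isHermitian_conjTranspose_mul_self R) fun x hx => ?_
  have hy : R *ᵥ x ≠ 0 := by
    have := (Matrix.mulVec_injective_iff_isUnit.mpr hR)
    exact fun h => hx (by simpa using this (h.trans (by simp)))
  have : star x ⬝ᵥ ((Rᴴ * R) *ᵥ x) = star (R *ᵥ x) ⬝ᵥ (R *ᵥ x) := by
    rw [← mulVec_mulVec, dotProduct_mulVec, star_mulVec]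
  rw [this]
  exact dotProduct_star_self_pos_iff.mpr hy

/-- congruence: `C * M * C` is PosDef when `M` PosDef, `C` hermitian invertible. -/
lemma posDef_conj {C M : Matrix n n ℂ} (hM : M.PosDef) (hC : C.IsHermitian)
    (hCu : IsUnit C) : (C * M * C).PosDef := by
  refine PosDef.of_dotProduct_mulVec_pos ?_ ?_
  · rw [Matrix.IsHermitian]
    simp [conjTranspose_mul, hC.eq, hM.1.eq, mul_assoc]
  · intro x hx
    have hy : C *ᵥ x ≠ 0 := by
      have := (Matrix.mulVec_injective_iff_isUnit.mpr hCu)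
      exact fun h => hx (by simpa using this (h.trans (by simp)))
    have key : star (C *ᵥ x) ⬝ᵥ (M *ᵥ (C *ᵥ x)) = star x ⬝ᵥ ((C * M * C) *ᵥ x) := by
      rw [star_mulVec, hC.eq, ← dotProduct_mulVec, mulVec_mulVec, mulVec_mulVec]
    rw [← key]
    exact hM.dotProduct_mulVec_pos hy

/-- complex spectrum of a hermitian complex matrix is the range of eigenvalues. -/
lemma herm_spectrum {M : Matrix n n ℂ} (hM : M.IsHermitian) :
    spectrum ℂ M = Set.range (fun i => (hM.eigenvalues i : ℂ)) := by
  rw [hM.spectrum_eq_image_range, ← Set.range_comp]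
  rfl

lemma posDef_spectrum {M : Matrix n n ℂ} (hM : M.PosDef) :
    ∀ μ ∈ spectrum ℂ M, μ.im = 0 ∧ 0 < μ.re := by
  intro μ hμ
  rw [herm_spectrum hM.1] at hμ
  obtain ⟨i, rfl⟩ := hμ
  exact ⟨by simp, by simpa using hM.eigenvalues_pos i⟩

/-- a real positive definite matrix maps to a complex positive definite matrix. -/
lemma posDef_map {A : Matrix n n ℝ} (hA : A.PosDef) :
    (A.map (algebraMap ℝ ℂ)).PosDef := by
  set R := CFC.sqrt A with hRdef
  have hR : R.PosSemidef := (CFC.sqrt_nonneg A).posSemidef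
  have hRR : R * R = A := CFC.sqrt_mul_sqrt_self A hA.posSemidef.nonneg
  have hdet : R.det ≠ 0 := by
    intro h
    have : A.det = 0 := by rw [← hRR, det_mul, h, mul_zero]
    exact hA.det_pos.ne' this
  have hmap : A.map (algebraMap ℝ ℂ) = (R.map (algebraMap ℝ ℂ))ᴴ * R.map (algebraMap ℝ ℂ) := by
    have hherm : (R.map (algebraMap ℝ ℂ)).IsHermitian :=
      hR.1.map _ (fun r => by simp [Complex.conj_ofReal])
    rw [hherm.eq, ← Matrix.map_mul (f := algebraMap ℝ ℂ), hRR]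
  rw [hmap]
  apply posDef_conjTranspose_mul_self_of_isUnit
  rw [Matrix.isUnit_iff_isUnit_det, ← RingHom.mapMatrix_apply, ← RingHom.map_det]
  exact isUnit_iff_ne_zero.mpr (by simpa using hdet)

/-- Evaluation of a palindrome at two complex PosDef matrices is PosDef. -/
lemma palindrome_posDef {A B : Matrix n n ℂ} (hA : A.PosDef) (hB : B.PosDef)
    {l : List Bool} (hl : l.reverse = l) :
    ((l.map fun c : Bool => if c then B else A).prod).PosDef := by
  suffices h : ∀ m : List Bool, m.Palindrome → ((m.map fun c : Bool => if c then B else A).prod).PosDef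
    from h _ (List.Palindrome.of_reverse_eq hl)
  intro m hm
  induction hm with
  | nil => simpa using Matrix.PosDef.one
  | singleton x => cases x <;> simpa
  | @cons_concat x l hp ih =>
      have hC : (if x then B else A).PosDef := by cases x <;> simpa
      have : ((x :: (l ++ [x])).map fun c : Bool => if c then B else A).prod
          = (if x then B else A) * (l.map fun c : Bool => if c then B else A).prod
            * (if x then B else A) := by
        simp [List.map_append, List.prod_append, mul_assoc]
      rw [this]
      exact posDef_conj ih hC.1 hC.isUnit

/-- The spectrum of a product of two complex PosDef matrices is positive real. -/
lemma posDef_mul_spectrum {S T : Matrix n n ℂ} (hS : S.PosDef) (hT : T.PosDef) :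
    ∀ μ ∈ spectrum ℂ (S * T), μ.im = 0 ∧ 0 < μ.re := by
  set R := CFC.sqrt S with hRdef
  have hR : R.PosSemidef := (CFC.sqrt_nonneg S).posSemidef
  have hRR : R * R = S := CFC.sqrt_mul_sqrt_self S hS.posSemidef.nonneg
  have hdet : IsUnit R := by
    rw [Matrix.isUnit_iff_isUnit_det]
    refine isUnit_iff_ne_zero.mpr fun h => ?_
    have : S.det = 0 := by rw [← hRR, det_mul, h, mul_zero]
    exact hS.det_pos.ne' this
  have hconj : S * T = R * (R * T * R) * R⁻¹ := by
    have h1 : R * R⁻¹ = 1 := mul_nonsing_inv R (by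
      simpa [Matrix.isUnit_iff_isUnit_det] using hdet)
    calc S * T = (R * R) * T * (R * R⁻¹) := by rw [h1, hRR, mul_one]
      _ = R * (R * T * R) * R⁻¹ := by simp only [mul_assoc]
  intro μ hμ
  rw [hconj] at hμ
  have hu : R * (R * T * R) * R⁻¹
      = (hdet.unit : Matrix n n ℂ) * (R * T * R) * ((hdet.unit⁻¹ : (Matrix n n ℂ)ˣ) : Matrix n n ℂ) := by
    rw [Matrix.coe_units_inv, IsUnit.unit_spec]
  rw [hu, spectrum.units_conjugate] at hμ
  exact posDef_spectrum (posDef_conj hT hR.1 hdet) μ hμ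

lemma wordEval_map (w : List Bool) (A B : Matrix n n ℝ) :
    (wordEval w A B).map (algebraMap ℝ ℂ)
      = (w.map fun c : Bool =>
          if c then B.map (algebraMap ℝ ℂ) else A.map (algebraMap ℝ ℂ)).prod := by
  have h0 : (wordEval w A B).map (algebraMap ℝ ℂ)
      = (algebraMap ℝ ℂ).mapMatrix (wordEval w A B) := rfl
  rw [h0, wordEval, map_list_prod, List.map_map]
  congr 1
  refine List.map_congr_left fun c _ => ?_
  cases c <;> rfl

end Aux

/-- Every word of length `< 6` is nearly symmetric, and consequently every word of
length `< 6` in two real symmetric positive definite matrices has only positive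
eigenvalues. -/
theorem short_words_nearlySymmetric_pos_eigenvalues :
    (∀ w : List Bool, w.length < 6 →
      ∃ S1 S2 : List Bool, S1.reverse = S1 ∧ S2.reverse = S2 ∧ w = S1 ++ S2) ∧
    (∀ (w : List Bool), w.length < 6 →
      ∀ {n : Type} [Fintype n] [DecidableEq n] (A B : Matrix n n ℝ),
        A.PosDef → B.PosDef →
        ∀ μ ∈ spectrum ℂ ((wordEval w A B).map (algebraMap ℝ ℂ)),
          μ.im = 0 ∧ 0 < μ.re) := by
  refine ⟨split_aux, ?_⟩
  intro w hw n _ _ A B hA hB μ hμ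
  obtain ⟨S1, S2, h1, h2, rfl⟩ := split_aux w hw
  rw [wordEval_map, List.map_append, List.prod_append] at hμ
  exact posDef_mul_spectrum
    (palindrome_posDef (posDef_map hA) (posDef_map hB) h1)
    (palindrome_posDef (posDef_map hA) (posDef_map hB) h2) μ hμ
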